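/- For any finite-dimensional poset P: (a) bd-dim(P) equals the supremum of bd-dim(P') over all finite (nonempty) subposets P' of P; and (b) abs(P) equals the infimum of abs(P') over all finite subposets P' of P satisfying dim(P') = dim(P). -/

import Mathlib

universe u

/-- The order dimension of a poset: the least cardinal `κ` such that the partial
order is the intersection of `κ` linear orderings (each extending it). -/
noncomputable def orderDim (α : Type u) [PartialOrder α] : Cardinal.{u} :=
  sInf {κ : Cardinal.{u} | ∃ (ι : Type u) (r : ι → α → α → Prop),
    (∀ i, IsLinearOrder α (r i)) ∧
    (∀ x y : α, x ≤ y ↔ ∀ i, r i x y) ∧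
    Cardinal.mk ι = κ}

/-- The absorbency of a (finite-dimensional) poset `P`: the largest natural
number `n` such that taking the product of `P` with any `n`-tuple of (nonempty)
chains does not change the dimension. -/
noncomputable def absorb (P : Type u) [PartialOrder P] : ℕ :=
  sSup {n : ℕ | ∀ (T : Fin n → Type u) [∀ i, LinearOrder (T i)] [∀ i, Nonempty (T i)],
    orderDim (P × ∀ i, T i) = orderDim P}

/-- The bounded dimension of a (finite-dimensional) poset `P`: the greatest
natural number `n` such that some bounded subposet of `P` (equivalently, some
nonempty interval `[p, p']`) has dimension `n`. -/
noncomputable def bdDim (P : Type u) [PartialOrder P] : ℕ :=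
  sSup {n : ℕ | ∃ p p' : P, p ≤ p' ∧ orderDim ↥(Set.Icc p p') = n}


section Basic

variable {α : Type u} [PartialOrder α]

/-- single-pair linear extension -/
theorem extendPair {a b : α} (h : ¬ b ≤ a) :
    ∃ r : α → α → Prop, IsLinearOrder α r ∧ (∀ x y : α, x ≤ y → r x y) ∧ r a b := by
  classical
  set s : α → α → Prop := fun x y => x ≤ y ∨ (x ≤ a ∧ b ≤ y) with hs
  have hpo : IsPartialOrder α s := by
    refine { refl := fun x => Or.inl le_rfl, trans := ?_, antisymm := ?_ }
    · intro x y z hxy hyz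
      rcases hxy with hxy | ⟨hxa, hby⟩
      · rcases hyz with hyz | ⟨hya, hbz⟩
        · exact Or.inl (hxy.trans hyz)
        · exact Or.inr ⟨hxy.trans hya, hbz⟩
      · rcases hyz with hyz | ⟨hya, hbz⟩
        · exact Or.inr ⟨hxa, hby.trans hyz⟩
        · exact absurd (hby.trans hya) h
    · intro x y hxy hyx
      rcases hxy with hxy | ⟨hxa, hby⟩
      · rcases hyx with hyx | ⟨hya, hbx⟩
        · exact le_antisymm hxy hyx
        · exact absurd ((hbx.trans hxy).trans hya) h
      · rcases hyx with hyx | ⟨hya, hbx⟩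
        · exact absurd ((hby.trans hyx).trans hxa) h
        · exact absurd (hby.trans hya) h
  obtain ⟨r, hr, hsr⟩ := extend_partialOrder s
  exact ⟨r, hr, fun x y hxy => hsr _ _ (Or.inl hxy), hsr _ _ (Or.inr ⟨le_rfl, le_rfl⟩)⟩

def realizerSet (α : Type u) [PartialOrder α] : Set Cardinal.{u} :=
  {κ : Cardinal.{u} | ∃ (ι : Type u) (r : ι → α → α → Prop),
    (∀ i, IsLinearOrder α (r i)) ∧
    (∀ x y : α, x ≤ y ↔ ∀ i, r i x y) ∧
    Cardinal.mk ι = κ}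

theorem orderDim_eq_sInf (α : Type u) [PartialOrder α] :
    orderDim α = sInf (realizerSet α) := rfl

theorem realizerSet_nonempty (α : Type u) [PartialOrder α] :
    (realizerSet α).Nonempty := by
  classical
  set ι : Type u := {r : α → α → Prop // IsLinearOrder α r ∧ ∀ x y : α, x ≤ y → r x y}
  refine ⟨Cardinal.mk ι, ι, fun i => i.1, fun i => i.2.1, fun x y => ?_, rfl⟩
  constructor
  · exact fun hxy i => i.2.2 x y hxy
  · intro hall
    by_contra hxy
    obtain ⟨r, hr, hext, hba⟩ := extendPair (a := y) (b := x) hxy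
    have hxyne : x ≠ y := fun hxyeq => hxy (hxyeq ▸ le_rfl)
    have := hall ⟨r, hr, hext⟩
    exact hxyne (hr.antisymm _ _ this hba)

theorem exists_realizer (α : Type u) [PartialOrder α] :
    ∃ (ι : Type u) (r : ι → α → α → Prop),
      (∀ i, IsLinearOrder α (r i)) ∧
      (∀ x y : α, x ≤ y ↔ ∀ i, r i x y) ∧
      Cardinal.mk ι = orderDim α := by
  have := csInf_mem (realizerSet_nonempty α)
  exact this

theorem orderDim_le_mk {ι : Type u} (r : ι → α → α → Prop)
    (h1 : ∀ i, IsLinearOrder α (r i)) (h2 : ∀ x y : α, x ≤ y ↔ ∀ i, r i x y) :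
    orderDim α ≤ Cardinal.mk ι :=
  csInf_le' ⟨ι, r, h1, h2, rfl⟩

theorem orderDim_le_of_orderEmbedding {β : Type u} [PartialOrder β] (f : α ↪o β) :
    orderDim α ≤ orderDim β := by
  obtain ⟨ι, r, h1, h2, h3⟩ := exists_realizer β
  rw [← h3]
  refine orderDim_le_mk (fun i x y => r i (f x) (f y)) (fun i => ?_) (fun x y => ?_)
  · haveI := h1 i
    exact { refl := fun x => (h1 i).refl _,
            trans := fun x y z hxy hyz => (h1 i).trans _ _ _ hxy hyz,
            antisymm := fun x y hxy hyx => f.injective ((h1 i).antisymm _ _ hxy hyx),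
            total := fun x y => (h1 i).total _ _ }
  · rw [← f.le_iff_le, h2]

theorem orderDim_eq_of_orderIso {β : Type u} [PartialOrder β] (e : α ≃o β) :
    orderDim α = orderDim β :=
  le_antisymm (orderDim_le_of_orderEmbedding e.toOrderEmbedding)
    (orderDim_le_of_orderEmbedding e.symm.toOrderEmbedding)

theorem orderDim_subsingleton [Subsingleton α] : orderDim α = 0 := by
  have : orderDim α ≤ Cardinal.mk PEmpty.{u+1} := by
    refine orderDim_le_mk (fun i => i.elim) (fun i => i.elim) (fun x y => ?_)
    simp only [Subsingleton.elim x y, le_refl, true_iff]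
    exact fun i => i.elim
  simpa using this

end Basic

section FinRealizer

variable {α : Type u} [PartialOrder α]

theorem szpilrajn (α : Type u) [PartialOrder α] :
    ∃ r : α → α → Prop, IsLinearOrder α r ∧ ∀ x y : α, x ≤ y → r x y := by
  obtain ⟨s, hs, hle⟩ := extend_partialOrder ((· ≤ ·) : α → α → Prop)
  exact ⟨s, hs, fun x y h => hle _ _ h⟩

theorem orderDim_le_nat {n : ℕ} (r : Fin n → α → α → Prop)
    (h1 : ∀ i, IsLinearOrder α (r i)) (h2 : ∀ x y : α, x ≤ y ↔ ∀ i, r i x y) :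
    orderDim α ≤ n := by
  have := orderDim_le_mk (fun i : ULift.{u} (Fin n) => r i.down)
    (fun i => h1 i.down)
    (fun x y => (h2 x y).trans ⟨fun h i => h i.down, fun h i => h (ULift.up i)⟩)
  simpa using this

theorem exists_finRealizer {n : ℕ} (h : orderDim α ≤ n) :
    ∃ r : Fin n → α → α → Prop,
      (∀ i, IsLinearOrder α (r i)) ∧ (∀ x y : α, x ≤ y ↔ ∀ i, r i x y) := by
  classical
  obtain ⟨ι, r, hr1, hr2, hr3⟩ := exists_realizer α
  obtain ⟨s₀, hs₀, hs₀le⟩ := szpilrajn α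
  have hle : Cardinal.mk ι ≤ Cardinal.mk (ULift.{u} (Fin n)) := by
    rw [hr3]; simpa using h
  obtain ⟨f⟩ := hle
  set r' : Fin n → α → α → Prop := fun j =>
    if h : ∃ i, f i = ULift.up j then r h.choose else s₀ with hr'
  refine ⟨r', fun j => ?_, fun x y => ?_⟩
  · rw [hr']; dsimp only
    split
    · exact hr1 _
    · exact hs₀
  · constructor
    · intro hxy j
      rw [hr']; dsimp only
      split
      · exact ((hr2 x y).1 hxy) _
      · exact hs₀le _ _ hxy
    · intro hall
      rw [hr2]
      intro i
      have hex : ∃ i', f i' = ULift.up (f i).down := ⟨i, by simp⟩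
      have hch : hex.choose = i := f.injective (by rw [hex.choose_spec])
      have := hall (f i).down
      rw [hr'] at this
      rw [dif_pos hex] at this
      rwa [hch] at this

end FinRealizer

section Compactness

open Filter

variable {α : Type u} [PartialOrder α]

theorem orderDim_compact [Nonempty α] {n : ℕ}
    (h : ∀ S : Set α, S.Finite → S.Nonempty → orderDim (↥S) ≤ n) :
    orderDim α ≤ n := by
  classical
  have hreal : ∀ F : Finset α, ∃ r : Fin n → (↑F : Set α) → (↑F : Set α) → Prop,
      (∀ i, IsLinearOrder _ (r i)) ∧ (∀ x y, x ≤ y ↔ ∀ i, r i x y) := by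
    intro F
    rcases F.eq_empty_or_nonempty with hF | hF
    · subst hF
      refine ⟨fun _ _ _ => True, fun i => ?_, fun x y => ?_⟩
      · exact { refl := fun x => trivial, trans := fun _ _ _ _ _ => trivial,
                antisymm := fun x => absurd x.2 (by simp),
                total := fun _ _ => Or.inl trivial }
      · exact absurd x.2 (by simp)
    · exact exists_finRealizer (h ↑F F.finite_toSet (by exact_mod_cast hF))
  choose R hR1 hR2 using hreal
  set U : Ultrafilter (Finset α) := Ultrafilter.of atTop with hUdef
  have hmem : ∀ F₀ : Finset α, {F : Finset α | F₀ ⊆ F} ∈ U := by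
    intro F₀
    exact Ultrafilter.of_le atTop (mem_atTop F₀)
  set r : Fin n → α → α → Prop := fun i x y =>
    {F : Finset α | ∃ (hx : x ∈ (↑F : Set α)) (hy : y ∈ (↑F : Set α)),
      R F i ⟨x, hx⟩ ⟨y, hy⟩} ∈ U with hrdef
  have hcoe : ∀ {x : α} {F : Finset α}, x ∈ F → x ∈ (↑F : Set α) := fun hx =>
    Finset.mem_coe.mpr hx
  -- reflexivity
  have hrefl : ∀ i (x : α), r i x x := by
    intro i x
    refine Filter.mem_of_superset (hmem {x}) ?_
    intro F hF
    have hx : x ∈ (↑F : Set α) := hcoe (hF (Finset.mem_singleton_self x))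
    exact ⟨hx, hx, ((hR2 F ⟨x, hx⟩ ⟨x, hx⟩).1 le_rfl) i⟩
  -- transitivity
  have htrans : ∀ i (x y z : α), r i x y → r i y z → r i x z := by
    intro i x y z hxy hyz
    refine Filter.mem_of_superset (Filter.inter_mem hxy hyz) ?_
    rintro F ⟨⟨hx, hy, h1⟩, ⟨hy', hz, h2⟩⟩
    exact ⟨hx, hz, (hR1 F i).trans _ _ _ h1 h2⟩
  -- antisymmetry
  have hanti : ∀ i (x y : α), r i x y → r i y x → x = y := by
    intro i x y hxy hyx
    obtain ⟨F, ⟨hx, hy, h1⟩, ⟨hy', hx', h2⟩⟩ :=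
      Filter.nonempty_of_mem (Filter.inter_mem hxy hyx)
    have := (hR1 F i).antisymm _ _ h1 h2
    exact congrArg Subtype.val this
  -- totality
  have htot : ∀ i (x y : α), r i x y ∨ r i y x := by
    intro i x y
    have hsub : {F : Finset α | ({x, y} : Finset α) ⊆ F} ⊆
        {F : Finset α | ∃ (hx : x ∈ (↑F : Set α)) (hy : y ∈ (↑F : Set α)),
          R F i ⟨x, hx⟩ ⟨y, hy⟩} ∪
        {F : Finset α | ∃ (hy : y ∈ (↑F : Set α)) (hx : x ∈ (↑F : Set α)),
          R F i ⟨y, hy⟩ ⟨x, hx⟩} := by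
      intro F hF
      have hx : x ∈ (↑F : Set α) := hcoe (hF (by simp))
      have hy : y ∈ (↑F : Set α) := hcoe (hF (by simp))
      rcases (hR1 F i).total ⟨x, hx⟩ ⟨y, hy⟩ with h1 | h1
      · exact Or.inl ⟨hx, hy, h1⟩
      · exact Or.inr ⟨hy, hx, h1⟩
    have := Filter.mem_of_superset (hmem {x, y}) hsub
    exact (Ultrafilter.union_mem_iff.mp this)
  -- realizing, forward
  have hfwd : ∀ (x y : α), x ≤ y → ∀ i, r i x y := by
    intro x y hxy i
    refine Filter.mem_of_superset (hmem {x, y}) ?_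
    intro F hF
    have hx : x ∈ (↑F : Set α) := hcoe (hF (by simp))
    have hy : y ∈ (↑F : Set α) := hcoe (hF (by simp))
    exact ⟨hx, hy, (hR2 F ⟨x, hx⟩ ⟨y, hy⟩).1 (Subtype.mk_le_mk.mpr hxy) i⟩
  -- realizing, backward
  have hbwd : ∀ (x y : α), (∀ i, r i x y) → x ≤ y := by
    intro x y hall
    by_contra hxy
    set S : Fin n → Set (Finset α) := fun i =>
      {F : Finset α | ∃ (hx : x ∈ (↑F : Set α)) (hy : y ∈ (↑F : Set α)),
        ¬ R F i ⟨x, hx⟩ ⟨y, hy⟩} with hSdef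
    have hex : ∃ i, S i ∈ U := by
      by_contra hne
      push_neg at hne
      have hcompl : (⋂ i, (S i)ᶜ) ∈ U :=
        Filter.iInter_mem.mpr fun i => (Ultrafilter.compl_mem_iff_notMem).mpr (hne i)
      obtain ⟨F, hF1, hF2⟩ :=
        Filter.nonempty_of_mem (Filter.inter_mem (hmem {x, y}) hcompl)
      have hx : x ∈ (↑F : Set α) := hcoe (hF1 (by simp))
      have hy : y ∈ (↑F : Set α) := hcoe (hF1 (by simp))
      have : ¬ ((⟨x, hx⟩ : (↑F : Set α)) ≤ ⟨y, hy⟩) := fun hle =>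
        hxy (Subtype.mk_le_mk.mp hle)
      rw [hR2 F] at this
      push_neg at this
      obtain ⟨i, hi⟩ := this
      have := Set.mem_iInter.mp hF2 i
      exact this ⟨hx, hy, hi⟩
    obtain ⟨i, hSi⟩ := hex
    obtain ⟨F, ⟨hx, hy, h1⟩, ⟨hx', hy', h2⟩⟩ :=
      Filter.nonempty_of_mem (Filter.inter_mem (hall i) hSi)
    exact h2 h1
  exact orderDim_le_nat r
    (fun i => { refl := hrefl i, trans := htrans i,
                antisymm := hanti i, total := htot i })
    (fun x y => ⟨hfwd x y, hbwd x y⟩)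

end Compactness

section Embeddings

variable {α : Type u} [PartialOrder α]

theorem orderDim_subtype_le (p : α → Prop) : orderDim (Subtype p) ≤ orderDim α :=
  orderDim_le_of_orderEmbedding (OrderEmbedding.subtype p)

theorem orderDim_subset_le {S S' : Set α} (h : S ⊆ S') :
    orderDim ↥S ≤ orderDim ↥S' :=
  orderDim_le_of_orderEmbedding
    (OrderEmbedding.ofMapLEIff (fun x => (⟨x.val, h x.2⟩ : ↥S'))
      (fun a b => Iff.rfl))

/-- squeeze: if `↑m < c ≤ ↑n` is impossible unless..., here: `c ≤ ↑n`, `¬ c ≤ ↑(n-1)`, `1 ≤ n` gives `c = ↑n`; we use a general squeeze -/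
theorem card_eq_of_between {c : Cardinal.{u}} {n : ℕ} (h1 : c ≤ (n : Cardinal))
    (h2 : ¬ c ≤ ((n - 1 : ℕ) : Cardinal)) (hn : 1 ≤ n) : c = n := by
  obtain ⟨m, rfl⟩ := Cardinal.lt_aleph0.mp (h1.trans_lt (Cardinal.nat_lt_aleph0 n))
  have hm : m ≤ n := by exact_mod_cast h1
  have hm2 : ¬ m ≤ n - 1 := fun hle => h2 (by exact_mod_cast hle)
  have : m = n := by omega
  exact_mod_cast this

theorem le_orderDim_pi_bool (n : ℕ) :
    (n : Cardinal.{u}) ≤ orderDim (∀ _ : Fin n, ULift.{u} Bool) := by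
  classical
  obtain ⟨ι, r, h1, h2, h3⟩ := exists_realizer (∀ _ : Fin n, ULift.{u} Bool)
  set a : Fin n → (∀ _ : Fin n, ULift.{u} Bool) :=
    fun i j => ULift.up (decide (j = i)) with ha
  set b : Fin n → (∀ _ : Fin n, ULift.{u} Bool) :=
    fun i j => ULift.up (!decide (j = i)) with hb
  have hab : ∀ i k : Fin n, i ≠ k → a i ≤ b k := by
    intro i k hik j
    show (ULift.up (decide (j = i)) : ULift.{u} Bool) ≤ ULift.up (!decide (j = k))
    by_cases hj : j = i
    · subst hj
      simp [hik]
    · simp [hj]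
  have hnab : ∀ i : Fin n, ¬ a i ≤ b i := by
    intro i hle
    have := hle i
    simp [ha, hb] at this
    exact absurd this (by decide)
  have hchoice : ∀ i : Fin n, ∃ ℓ : ι, ¬ r ℓ (a i) (b i) := by
    intro i
    by_contra hc
    push_neg at hc
    exact hnab i ((h2 (a i) (b i)).2 hc)
  choose g hg using hchoice
  have hginj : Function.Injective g := by
    intro i i' hgi
    by_contra hne
    have t1 : r (g i) (b i) (a i) :=
      ((h1 (g i)).total _ _).resolve_left (hg i)
    have t2 : r (g i) (b i') (a i') := by
      rw [hgi]
      exact ((h1 (g i')).total _ _).resolve_left (hg i')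
    have t3 : r (g i) (a i) (b i') := (h2 _ _).1 (hab i i' hne) (g i)
    have t4 : r (g i) (a i') (b i) := (h2 _ _).1 (hab i' i (Ne.symm hne)) (g i)
    exact hg i ((h1 (g i)).trans _ _ _ ((h1 (g i)).trans _ _ _ t3 t2) t4)
  have : Cardinal.mk (ULift.{u} (Fin n)) ≤ Cardinal.mk ι :=
    Cardinal.mk_le_of_injective (f := fun i => g i.down)
      (fun x y hxy => ULift.ext _ _ (hginj hxy))
  rw [h3] at this
  simpa using this

end Embeddings

section Absorb

def absorbSet (X : Type u) [PartialOrder X] : Set ℕ :=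
  {n : ℕ | ∀ (T : Fin n → Type u) [∀ i, LinearOrder (T i)] [∀ i, Nonempty (T i)],
    orderDim (X × ∀ i, T i) = orderDim X}

theorem absorb_eq (X : Type u) [PartialOrder X] : absorb X = sSup (absorbSet X) := rfl

def bdDimSet (X : Type u) [PartialOrder X] : Set ℕ :=
  {n : ℕ | ∃ p p' : X, p ≤ p' ∧ orderDim ↥(Set.Icc p p') = n}

theorem bdDim_eq (X : Type u) [PartialOrder X] : bdDim X = sSup (bdDimSet X) := rfl

variable {X Y : Type u} [PartialOrder X] [PartialOrder Y]

theorem dim_left_le [Nonempty Y] : orderDim X ≤ orderDim (X × Y) := by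
  have y₀ : Y := Classical.arbitrary Y
  exact orderDim_le_of_orderEmbedding
    (OrderEmbedding.ofMapLEIff (fun x => (x, y₀)) (fun a b => by
      simp [Prod.mk_le_mk]))

theorem dim_right_le [Nonempty X] : orderDim Y ≤ orderDim (X × Y) := by
  have x₀ : X := Classical.arbitrary X
  exact orderDim_le_of_orderEmbedding
    (OrderEmbedding.ofMapLEIff (fun y => (x₀, y)) (fun a b => by
      simp [Prod.mk_le_mk]))

theorem zero_mem_absorbSet : 0 ∈ absorbSet X := by
  intro T _ _
  refine orderDim_eq_of_orderIso ⟨⟨fun p => p.1, fun x => (x, fun i => i.elim0), ?_, ?_⟩, ?_⟩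
  · intro p
    refine Prod.ext rfl ?_
    funext i
    exact i.elim0
  · intro x
    rfl
  · intro p q
    constructor
    · intro h
      exact ⟨h, fun i => i.elim0⟩
    · intro h
      exact h.1

theorem absorbSet_down {m n : ℕ} (hmn : m ≤ n) (hn : n ∈ absorbSet X) :
    m ∈ absorbSet X := by
  rcases Nat.eq_zero_or_pos m with hm | hm
  · subst hm; exact zero_mem_absorbSet
  intro T instL instN
  set pad : Fin n → Fin m := fun j => if h : (j : ℕ) < m then ⟨j, h⟩ else ⟨0, hm⟩ with hpad
  have hpadL : ∀ i : Fin m, pad (Fin.castLE hmn i) = i := by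
    intro i
    have hi : ((Fin.castLE hmn i : Fin n) : ℕ) < m := i.2
    simp only [hpad, dif_pos hi]
    apply Fin.ext
    rfl
  have key := hn (fun j => T (pad j))
  have hle1 : orderDim (X × ∀ i, T i) ≤ orderDim (X × ∀ j, T (pad j)) := by
    refine orderDim_le_of_orderEmbedding
      (OrderEmbedding.ofMapLEIff (fun p => (p.1, fun j => p.2 (pad j))) ?_)
    intro p q
    simp only [Prod.mk_le_mk, Prod.le_def]
    constructor
    · rintro ⟨h1, h2⟩
      refine ⟨h1, fun i => ?_⟩
      have := h2 (Fin.castLE hmn i)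
      dsimp only at this
      exact hpadL i ▸ this
    · rintro ⟨h1, h2⟩
      exact ⟨h1, fun j => h2 (pad j)⟩
  have hge : orderDim X ≤ orderDim (X × ∀ i, T i) := dim_left_le
  have := hle1.trans (le_of_eq key)
  exact le_antisymm this hge

theorem absorbSet_bdd [Nonempty X] {N : ℕ} (hX : orderDim X ≤ (N : Cardinal))
    {n : ℕ} (hn : n ∈ absorbSet X) : n ≤ N := by
  have key := hn (fun _ => ULift.{u} Bool)
  have h1 : (n : Cardinal.{u}) ≤ orderDim (X × ∀ _ : Fin n, ULift.{u} Bool) :=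
    (le_orderDim_pi_bool n).trans dim_right_le
  rw [key] at h1
  exact_mod_cast h1.trans hX

theorem zero_mem_bdDimSet [Nonempty X] : 0 ∈ bdDimSet X := by
  have p : X := Classical.arbitrary X
  refine ⟨p, p, le_rfl, ?_⟩
  haveI : Subsingleton ↥(Set.Icc p p) :=
    ⟨fun a b => Subtype.ext (le_antisymm (a.2.2.trans b.2.1) (b.2.2.trans a.2.1))⟩
  rw [orderDim_subsingleton]
  simp

theorem bdDimSet_bdd {N : ℕ} (hX : orderDim X ≤ (N : Cardinal))
    {n : ℕ} (hn : n ∈ bdDimSet X) : n ≤ N := by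
  obtain ⟨p, p', hpp, hdim⟩ := hn
  have := (orderDim_subtype_le (· ∈ Set.Icc p p')).trans hX
  rw [hdim] at this
  exact_mod_cast this

end Absorb

section Main

variable {P : Type u} [PartialOrder P]

theorem bdDim_subset_le (hfd : orderDim P < Cardinal.aleph0)
    (S : Set P) (hSne : S.Nonempty) : bdDim ↥S ≤ bdDim P := by
  obtain ⟨N, hN⟩ := Cardinal.lt_aleph0.mp hfd
  haveI : Nonempty ↥S := hSne.to_subtype
  rw [bdDim_eq]
  refine csSup_le ⟨0, zero_mem_bdDimSet⟩ ?_
  intro m hm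
  obtain ⟨q, q', hqq, hdim⟩ := hm
  have hemb : orderDim ↥(Set.Icc q q') ≤ orderDim ↥(Set.Icc q.val q'.val) :=
    orderDim_le_of_orderEmbedding
      (OrderEmbedding.ofMapLEIff
        (fun x => ⟨x.val.val, ⟨x.2.1, x.2.2⟩⟩) (fun a b => Iff.rfl))
  have hPdim : orderDim ↥(Set.Icc q.val q'.val) ≤ orderDim P :=
    orderDim_subtype_le _
  obtain ⟨n', hn'⟩ := Cardinal.lt_aleph0.mp (hPdim.trans_lt hfd)
  have hmem' : n' ∈ bdDimSet P := ⟨q.val, q'.val, hqq, hn'⟩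
  have hmn' : m ≤ n' := by
    rw [hdim] at hemb
    rw [hn'] at hemb
    exact_mod_cast hemb
  have hbdd : BddAbove (bdDimSet P) :=
    ⟨N, fun k hk => bdDimSet_bdd hN.le hk⟩
  exact hmn'.trans (le_csSup hbdd hmem')

theorem bdDim_singleton (p : P) : bdDim ↥({p} : Set P) = 0 := by
  haveI : Nonempty ↥({p} : Set P) := ⟨⟨p, rfl⟩⟩
  haveI : Subsingleton ↥({p} : Set P) :=
    ⟨fun a b => Subtype.ext (a.2.trans b.2.symm)⟩
  rw [bdDim_eq]
  have h0 : orderDim ↥({p} : Set P) ≤ ((0 : ℕ) : Cardinal) := by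
    rw [orderDim_subsingleton]; simp
  refine Nat.le_antisymm ?_ (Nat.zero_le _)
  exact csSup_le ⟨0, zero_mem_bdDimSet⟩ (fun m hm => bdDimSet_bdd h0 hm)

theorem part_a [Nonempty P] (hfd : orderDim P < Cardinal.aleph0) :
    bdDim P = sSup {m : ℕ | ∃ S : Set P, S.Finite ∧ S.Nonempty ∧ bdDim ↥S = m} := by
  classical
  obtain ⟨N, hN⟩ := Cardinal.lt_aleph0.mp hfd
  set R := {m : ℕ | ∃ S : Set P, S.Finite ∧ S.Nonempty ∧ bdDim ↥S = m} with hR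
  set b := bdDim P with hb
  -- construct a finite S with bdDim ↥S = b
  have hwit : ∃ S : Set P, S.Finite ∧ S.Nonempty ∧ bdDim ↥S = b := by
    rcases Nat.eq_zero_or_pos b with hb0 | hb1
    · have p₀ : P := Classical.arbitrary P
      exact ⟨{p₀}, Set.finite_singleton p₀, ⟨p₀, rfl⟩, by rw [bdDim_singleton, hb0]⟩
    · have hbdd : BddAbove (bdDimSet P) := ⟨N, fun k hk => bdDimSet_bdd hN.le hk⟩
      have hbmem : b ∈ bdDimSet P :=
        Nat.sSup_mem ⟨0, zero_mem_bdDimSet⟩ hbdd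
      obtain ⟨p, p', hpp, hIcc⟩ := hbmem
      haveI : Nonempty ↥(Set.Icc p p') := ⟨⟨p, le_rfl, hpp⟩⟩
      have hnle : ¬ orderDim ↥(Set.Icc p p') ≤ ((b - 1 : ℕ) : Cardinal) := by
        rw [hIcc]
        intro hcon
        have : b ≤ b - 1 := by exact_mod_cast hcon
        omega
      obtain ⟨S0, hS0fin, hS0ne, hS0nle⟩ : ∃ S0 : Set ↥(Set.Icc p p'),
          S0.Finite ∧ S0.Nonempty ∧
            ¬ orderDim ↥S0 ≤ ((b - 1 : ℕ) : Cardinal) := by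
        by_contra hcon
        push_neg at hcon
        exact hnle (orderDim_compact hcon)
      have hS0le : orderDim ↥S0 ≤ ((b : ℕ) : Cardinal) := by
        refine (orderDim_subtype_le _).trans ?_
        rw [hIcc]
      have hS0dim : orderDim ↥S0 = ((b : ℕ) : Cardinal) :=
        card_eq_of_between hS0le hS0nle hb1
      set F : Set P := (Subtype.val '' S0) ∪ {p, p'} with hF
      have hFfin : F.Finite := (hS0fin.image _).union (by simp)
      have hpF : p ∈ F := Or.inr (by simp)
      have hp'F : p' ∈ F := Or.inr (by simp)
      set q : ↥F := ⟨p, hpF⟩ with hqdef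
      set q' : ↥F := ⟨p', hp'F⟩ with hq'def
      have hqq' : q ≤ q' := hpp
      have hle1 : orderDim ↥(Set.Icc q q') ≤ ((b : ℕ) : Cardinal) := by
        have : orderDim ↥(Set.Icc q q') ≤ orderDim ↥(Set.Icc p p') :=
          orderDim_le_of_orderEmbedding
            (OrderEmbedding.ofMapLEIff
              (fun x => ⟨x.val.val, ⟨x.2.1, x.2.2⟩⟩) (fun a b => Iff.rfl))
        rw [hIcc] at this
        exact this
      have hle2 : ((b : ℕ) : Cardinal) ≤ orderDim ↥(Set.Icc q q') := by
        rw [← hS0dim]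
        refine orderDim_le_of_orderEmbedding
          (OrderEmbedding.ofMapLEIff
            (fun x => ⟨⟨x.val.val, Or.inl ⟨x.val, x.2, rfl⟩⟩,
              ⟨x.val.2.1, x.val.2.2⟩⟩) (fun a b => Iff.rfl))
      have hFdim : orderDim ↥(Set.Icc q q') = ((b : ℕ) : Cardinal) :=
        le_antisymm hle1 hle2
      have hbmemF : b ∈ bdDimSet ↥F := ⟨q, q', hqq', hFdim⟩
      have hFne : F.Nonempty := ⟨p, hpF⟩
      haveI : Nonempty ↥F := hFne.to_subtype
      have hFNle : orderDim ↥F ≤ (N : Cardinal) := by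
        rw [← hN]; exact orderDim_subtype_le _
      have hbddF : BddAbove (bdDimSet ↥F) := ⟨N, fun k hk => bdDimSet_bdd hFNle hk⟩
      refine ⟨F, hFfin, hFne, le_antisymm (bdDim_subset_le hfd F hFne) ?_⟩
      rw [bdDim_eq]
      exact le_csSup hbddF hbmemF
  obtain ⟨S, hSfin, hSne, hSdim⟩ := hwit
  have hRb : b ∈ R := ⟨S, hSfin, hSne, hSdim⟩
  refine le_antisymm (le_csSup ⟨b, ?_⟩ hRb) (csSup_le ⟨b, hRb⟩ ?_)
  · rintro m ⟨S', _, hS'ne, rfl⟩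
    exact bdDim_subset_le hfd S' hS'ne
  · rintro m ⟨S', _, hS'ne, rfl⟩
    exact bdDim_subset_le hfd S' hS'ne

end Main

section MainB

variable {P : Type u} [PartialOrder P]

theorem absorb_mem_subset (hfd : orderDim P < Cardinal.aleph0)
    {S : Set P} (hSne : S.Nonempty) (hSdim : orderDim ↥S = orderDim P) :
    absorb P ∈ absorbSet ↥S := by
  obtain ⟨N, hN⟩ := Cardinal.lt_aleph0.mp hfd
  haveI : Nonempty ↥S := hSne.to_subtype
  have hPbdd : BddAbove (absorbSet P) := by
    rcases isEmpty_or_nonempty P with hP | hP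
    · exact ⟨N, fun k hk => by
        haveI : Nonempty P := ⟨Classical.choice (Nonempty.map Subtype.val
          (Set.Nonempty.to_subtype hSne))⟩
        exact absorbSet_bdd hN.le hk⟩
    · exact ⟨N, fun k hk => absorbSet_bdd hN.le hk⟩
  have hamem : absorb P ∈ absorbSet P :=
    Nat.sSup_mem ⟨0, zero_mem_absorbSet⟩ hPbdd
  intro T instL instN
  have hle1 : orderDim (↥S × ∀ i, T i) ≤ orderDim (P × ∀ i, T i) :=
    orderDim_le_of_orderEmbedding
      (OrderEmbedding.ofMapLEIff (fun pr => (pr.1.val, pr.2)) (fun a b => Iff.rfl))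
  have hle2 : orderDim ↥S ≤ orderDim (↥S × ∀ i, T i) := dim_left_le
  rw [hamem T] at hle1
  rw [← hSdim] at hle1
  exact le_antisymm hle1 hle2

theorem part_b [Nonempty P] (hfd : orderDim P < Cardinal.aleph0) :
    absorb P = sInf {m : ℕ | ∃ S : Set P, S.Finite ∧ S.Nonempty ∧
      orderDim ↥S = orderDim P ∧ absorb ↥S = m} := by
  classical
  obtain ⟨N, hN⟩ := Cardinal.lt_aleph0.mp hfd
  set R := {m : ℕ | ∃ S : Set P, S.Finite ∧ S.Nonempty ∧
      orderDim ↥S = orderDim P ∧ absorb ↥S = m} with hRdef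
  set a := absorb P with ha
  have hPbdd : BddAbove (absorbSet P) := ⟨N, fun k hk => absorbSet_bdd hN.le hk⟩
  have hamem : a ∈ absorbSet P := Nat.sSup_mem ⟨0, zero_mem_absorbSet⟩ hPbdd
  -- lower bound: a ≤ m for every m ∈ R
  have hlow : ∀ m ∈ R, a ≤ m := by
    rintro m ⟨S, hSfin, hSne, hSdim, rfl⟩
    haveI : Nonempty ↥S := hSne.to_subtype
    have hSbdd : BddAbove (absorbSet ↥S) :=
      ⟨N, fun k hk => absorbSet_bdd (hSdim.le.trans hN.le) hk⟩
    exact le_csSup hSbdd (absorb_mem_subset hfd hSne hSdim)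
  -- upper: find S with absorb ↥S = a
  have hwit : a ∈ R := by
    have hnotmem : a + 1 ∉ absorbSet P := by
      intro hmem
      have := le_csSup hPbdd hmem
      rw [absorb_eq] at ha
      omega
    simp only [absorbSet, Set.mem_setOf_eq, not_forall] at hnotmem
    obtain ⟨T, instL, instN, hneq⟩ := hnotmem
    letI : ∀ i, LinearOrder (T i) := instL
    letI : ∀ i, Nonempty (T i) := instN
    have hgeQ : orderDim P ≤ orderDim (P × ∀ i, T i) := dim_left_le
    have hnle : ¬ orderDim (P × ∀ i, T i) ≤ (N : Cardinal) := by
      intro hcon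
      exact hneq (le_antisymm (hcon.trans hN.ge) hgeQ)
    obtain ⟨G, hGfin, hGne, hGnle⟩ : ∃ G : Set (P × ∀ i, T i),
        G.Finite ∧ G.Nonempty ∧ ¬ orderDim ↥G ≤ (N : Cardinal) := by
      by_contra hcon
      push_neg at hcon
      exact hnle (orderDim_compact hcon)
    -- finite subset of P with full dimension
    obtain ⟨F0, hF0fin, hF0ne, hF0dim⟩ : ∃ F0 : Set P,
        F0.Finite ∧ F0.Nonempty ∧ orderDim ↥F0 = (N : Cardinal) := by
      rcases Nat.eq_zero_or_pos N with hN0 | hN1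
      · have p₀ : P := Classical.arbitrary P
        refine ⟨{p₀}, Set.finite_singleton p₀, ⟨p₀, rfl⟩, ?_⟩
        haveI : Subsingleton ↥({p₀} : Set P) :=
          ⟨fun x y => Subtype.ext (x.2.trans y.2.symm)⟩
        rw [orderDim_subsingleton, hN0]
        simp
      · have hPnle : ¬ orderDim P ≤ ((N - 1 : ℕ) : Cardinal) := by
          rw [hN]
          intro hcon
          have : N ≤ N - 1 := by exact_mod_cast hcon
          omega
        obtain ⟨F0, h1, h2, h3⟩ : ∃ F0 : Set P, F0.Finite ∧ F0.Nonempty ∧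
            ¬ orderDim ↥F0 ≤ ((N - 1 : ℕ) : Cardinal) := by
          by_contra hcon
          push_neg at hcon
          exact hPnle (orderDim_compact hcon)
        refine ⟨F0, h1, h2, card_eq_of_between ?_ h3 hN1⟩
        rw [← hN]
        exact orderDim_subtype_le _
    set S1 : Set P := (Prod.fst '' G) ∪ F0 with hS1def
    have hS1fin : S1.Finite := (hGfin.image _).union hF0fin
    have hS1ne : S1.Nonempty := (hGne.image _).inl
    haveI : Nonempty ↥S1 := hS1ne.to_subtype
    set C : ∀ i : Fin (a + 1), Set (T i) := fun i => (fun q => q.2 i) '' G with hCdef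
    haveI hCne : ∀ i, Nonempty ↥(C i) := fun i => (hGne.image _).to_subtype
    have hS1dim : orderDim ↥S1 = (N : Cardinal) := by
      refine le_antisymm ?_ ?_
      · rw [← hN]; exact orderDim_subtype_le _
      · rw [← hF0dim]
        exact orderDim_subset_le Set.subset_union_right
    have hnotmemS1 : a + 1 ∉ absorbSet ↥S1 := by
      intro hmem
      have key := hmem (fun i => ↥(C i))
      have hembG : orderDim ↥G ≤ orderDim (↥S1 × ∀ i, ↥(C i)) := by
        refine orderDim_le_of_orderEmbedding
          (OrderEmbedding.ofMapLEIff
            (fun g => (⟨g.val.1, Or.inl ⟨g.val, g.2, rfl⟩⟩,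
              fun i => ⟨g.val.2 i, ⟨g.val, g.2, rfl⟩⟩)) ?_)
        intro x y
        constructor
        · rintro ⟨h1, h2⟩
          exact ⟨h1, fun i => h2 i⟩
        · rintro h
          exact ⟨h.1, fun i => h.2 i⟩
      rw [key, hS1dim] at hembG
      exact hGnle hembG
    have hS1bdd : BddAbove (absorbSet ↥S1) :=
      ⟨N, fun k hk => absorbSet_bdd hS1dim.le hk⟩
    have hsupmem : absorb ↥S1 ∈ absorbSet ↥S1 :=
      Nat.sSup_mem ⟨0, zero_mem_absorbSet⟩ hS1bdd
    have habsle : absorb ↥S1 ≤ a := by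
      by_contra hcon
      push_neg at hcon
      exact hnotmemS1 (absorbSet_down hcon hsupmem)
    have hdimS1P : orderDim ↥S1 = orderDim P := hS1dim.trans hN.symm
    have habsge : a ≤ absorb ↥S1 :=
      le_csSup hS1bdd (absorb_mem_subset hfd hS1ne hdimS1P)
    exact ⟨S1, hS1fin, hS1ne, hdimS1P, le_antisymm habsle habsge⟩
  exact le_antisymm (le_csInf ⟨a, hwit⟩ hlow) (Nat.sInf_le hwit)

end MainB

theorem stmt19 (P : Type u) [PartialOrder P] [Nonempty P]
    (hfd : orderDim P < Cardinal.aleph0) :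
    bdDim P = sSup {m : ℕ | ∃ S : Set P, S.Finite ∧ S.Nonempty ∧ bdDim ↥S = m} ∧
    absorb P = sInf {m : ℕ | ∃ S : Set P, S.Finite ∧ S.Nonempty ∧
      orderDim ↥S = orderDim P ∧ absorb ↥S = m} :=
  ⟨part_a hfd, part_b hfd⟩
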